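/- There exists ε_0 > 0 such that for all ε, ρ with 0 < ε ≤ ε_0 and 0 < ρ ≤ ε/4 there exists N such that for every n ∈ 3ℤ with n ≥ N the following holds: let H be a (1,3)-partite 4-graph with partition classes Q, P, 3|Q| = |P| = n, such that d_H({u, v}) ≥ C(n−1, 2) − C(2n/3, 2) − ρn² for all v ∈ Q and u ∈ P. If H is not ε-close to any H_{1,3}(n, n/3) on V(H) (with larger class P and smaller class Q), then for every A ⊆ V(H) with |A ∩ Q| ≥ (1/3 − ε/8)n and |A ∩ P| ≥ (2/3 − ε/8)n, the induced subhypergraph H[A] has at least (ε/6)·e(H) edges. -/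

import Mathlib

/-- The extremal (1,3)-partite 4-graph `H_{1,3}(n, n/3)`: assuming `Q, P` partition the
vertex set and `W ⊆ P`, its edges are exactly the sets `s` with `|s ∩ Q| = 1`,
`|s ∩ P| = 3`, `(s ∩ P) ∩ W ≠ ∅` and `¬ s ∩ P ⊆ W`. -/
def extremalH13 {V : Type*} [Fintype V] [DecidableEq V] (Q P W : Finset V) :
    Finset (Finset V) :=
  Finset.univ.filter (fun e =>
    (e ∩ Q).card = 1 ∧ (e ∩ P).card = 3 ∧ (e ∩ P ∩ W).Nonempty ∧ ¬ e ∩ P ⊆ W)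

open Finset

variable {V : Type*} [Fintype V] [DecidableEq V]

lemma parts_decomp {Q P : Finset V} (hQP : Q ∪ P = Finset.univ) (e : Finset V) :
    e = (e ∩ Q) ∪ (e ∩ P) := by
  rw [← Finset.inter_union_distrib_left, hQP, Finset.inter_univ]

lemma interQ_singleton {Q : Finset V} {e : Finset V} {v : V} (hv : v ∈ Q) (hve : v ∈ e)
    (h1 : (e ∩ Q).card = 1) : e ∩ Q = {v} := by
  obtain ⟨a, ha⟩ := Finset.card_eq_one.mp h1
  have hva : v ∈ ({a} : Finset V) := ha ▸ Finset.mem_inter.mpr ⟨hve, hv⟩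
  simp only [Finset.mem_singleton] at hva
  rw [ha, hva]

lemma reconstruct {Q P : Finset V} (hQP : Q ∪ P = Finset.univ) {e : Finset V} {v u : V}
    (hv : v ∈ Q) (hu : u ∈ P) (hve : v ∈ e) (hue : u ∈ e) (h1 : (e ∩ Q).card = 1) :
    e = insert v (insert u ((e ∩ P).erase u)) := by
  have h2 : e ∩ P = insert u ((e ∩ P).erase u) :=
    (Finset.insert_erase (Finset.mem_inter.mpr ⟨hue, hu⟩)).symm
  calc e = (e ∩ Q) ∪ (e ∩ P) := parts_decomp hQP e
    _ = {v} ∪ insert u ((e ∩ P).erase u) := by rw [interQ_singleton hv hve h1, ← h2]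
    _ = insert v (insert u ((e ∩ P).erase u)) := (Finset.insert_eq _ _).symm

lemma degQ_le {Q P : Finset V} (hQP : Q ∪ P = Finset.univ) {H : Finset (Finset V)}
    (hH : ∀ e ∈ H, (e ∩ Q).card = 1 ∧ (e ∩ P).card = 3) {v : V} (hv : v ∈ Q) :
    (H.filter (fun e => v ∈ e)).card ≤ P.card.choose 3 := by
  rw [← Finset.card_powersetCard 3 P]
  apply Finset.card_le_card_of_injOn (fun e => e ∩ P)
  · intro e he
    simp only [Finset.mem_coe, Finset.mem_filter] at he
    exact Finset.mem_powersetCard.mpr ⟨Finset.inter_subset_right, (hH e he.1).2⟩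
  · intro e1 h1 e2 h2 h12
    simp only [Finset.coe_filter, Set.mem_setOf_eq] at h1 h2
    simp only [] at h12
    calc e1 = (e1 ∩ Q) ∪ (e1 ∩ P) := parts_decomp hQP e1
      _ = (e2 ∩ Q) ∪ (e2 ∩ P) := by
          rw [interQ_singleton hv h1.2 (hH e1 h1.1).1, interQ_singleton hv h2.2 (hH e2 h2.1).1,
            h12]
      _ = e2 := (parts_decomp hQP e2).symm

lemma degP_le {Q P : Finset V} (hQP : Q ∪ P = Finset.univ) {H : Finset (Finset V)}
    (hH : ∀ e ∈ H, (e ∩ Q).card = 1 ∧ (e ∩ P).card = 3) {u : V} (hu : u ∈ P) :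
    (H.filter (fun e => u ∈ e)).card ≤ Q.card * (P.card - 1).choose 2 := by
  have hcard : Q.card * (P.card - 1).choose 2
      = (Q.powersetCard 1 ×ˢ (P.erase u).powersetCard 2).card := by
    rw [Finset.card_product, Finset.card_powersetCard, Finset.card_powersetCard,
      Nat.choose_one_right, Finset.card_erase_of_mem hu]
  rw [hcard]
  apply Finset.card_le_card_of_injOn (fun e => (e ∩ Q, (e ∩ P).erase u))
  · intro e he
    simp only [Finset.mem_coe, Finset.mem_filter] at he
    refine Finset.mem_product.mpr ⟨Finset.mem_powersetCard.mpr ⟨Finset.inter_subset_right,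
      (hH e he.1).1⟩, Finset.mem_powersetCard.mpr ⟨?_, ?_⟩⟩
    · exact Finset.erase_subset_erase u Finset.inter_subset_right
    · rw [Finset.card_erase_of_mem (Finset.mem_inter.mpr ⟨he.2, hu⟩), (hH e he.1).2]
  · intro e1 h1 e2 h2 h12
    simp only [Finset.coe_filter, Set.mem_setOf_eq] at h1 h2
    simp only [Prod.mk.injEq] at h12
    have r1 : e1 ∩ P = insert u ((e1 ∩ P).erase u) :=
      (Finset.insert_erase (Finset.mem_inter.mpr ⟨h1.2, hu⟩)).symm
    have r2 : e2 ∩ P = insert u ((e2 ∩ P).erase u) :=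
      (Finset.insert_erase (Finset.mem_inter.mpr ⟨h2.2, hu⟩)).symm
    calc e1 = (e1 ∩ Q) ∪ (e1 ∩ P) := parts_decomp hQP e1
      _ = (e2 ∩ Q) ∪ (e2 ∩ P) := by rw [r1, r2, h12.1, h12.2]
      _ = e2 := (parts_decomp hQP e2).symm

lemma cardH_le {Q P : Finset V} (hQP : Q ∪ P = Finset.univ) {H : Finset (Finset V)}
    (hH : ∀ e ∈ H, (e ∩ Q).card = 1 ∧ (e ∩ P).card = 3) :
    H.card ≤ Q.card * P.card.choose 3 := by
  have hcard : Q.card * P.card.choose 3 = (Q.powersetCard 1 ×ˢ P.powersetCard 3).card := by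
    rw [Finset.card_product, Finset.card_powersetCard, Finset.card_powersetCard,
      Nat.choose_one_right]
  rw [hcard]
  apply Finset.card_le_card_of_injOn (fun e => (e ∩ Q, e ∩ P))
  · intro e he
    exact Finset.mem_product.mpr ⟨Finset.mem_powersetCard.mpr ⟨Finset.inter_subset_right,
      (hH e he).1⟩, Finset.mem_powersetCard.mpr ⟨Finset.inter_subset_right, (hH e he).2⟩⟩
  · intro e1 h1 e2 h2 h12
    simp only [Prod.mk.injEq] at h12
    calc e1 = (e1 ∩ Q) ∪ (e1 ∩ P) := parts_decomp hQP e1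
      _ = (e2 ∩ Q) ∪ (e2 ∩ P) := by rw [h12.1, h12.2]
      _ = e2 := (parts_decomp hQP e2).symm

lemma swap1 (T : Finset V) (S : Finset (Finset V)) :
    ∑ v ∈ T, (S.filter (fun e => v ∈ e)).card = ∑ e ∈ S, (T ∩ e).card := by
  simp only [Finset.card_filter]
  rw [Finset.sum_comm]
  refine Finset.sum_congr rfl fun e _ => ?_
  rw [← Finset.card_filter, Finset.filter_mem_eq_inter]

lemma swap2 (T T' : Finset V) (S : Finset (Finset V)) :
    ∑ v ∈ T, ∑ u ∈ T', (S.filter (fun e => v ∈ e ∧ u ∈ e)).card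
      = ∑ e ∈ S, (e ∩ T).card * (e ∩ T').card := by
  simp only [Finset.card_filter]
  rw [Finset.sum_comm]
  rw [show (∑ u ∈ T', ∑ v ∈ T, ∑ e ∈ S, if v ∈ e ∧ u ∈ e then 1 else 0)
      = ∑ u ∈ T', ∑ e ∈ S, ∑ v ∈ T, (if v ∈ e ∧ u ∈ e then 1 else 0) from
    Finset.sum_congr rfl fun u _ => Finset.sum_comm]
  rw [Finset.sum_comm]
  refine Finset.sum_congr rfl fun e _ => ?_
  rw [Finset.sum_comm]
  have h1 : ∀ X : Finset V, (e ∩ X).card = ∑ x ∈ X, if x ∈ e then 1 else 0 := by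
    intro X
    rw [← Finset.card_filter, Finset.filter_mem_eq_inter, Finset.inter_comm]
  rw [h1 T, h1 T', Finset.sum_mul_sum]
  refine Finset.sum_congr rfl fun v _ => Finset.sum_congr rfl fun u _ => ?_
  by_cases hv : v ∈ e <;> by_cases hu : u ∈ e <;> simp [hv, hu]

set_option maxHeartbeats 1000000 in
lemma pair_ineq {Q P U W : Finset V} (hQP : Q ∪ P = Finset.univ)
    (hUP : U ⊆ P) (hW : W = P \ U) {H : Finset (Finset V)}
    (hH : ∀ e ∈ H, (e ∩ Q).card = 1 ∧ (e ∩ P).card = 3)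
    {v u : V} (hv : v ∈ Q) (hu : u ∈ U) :
    ((extremalH13 Q P W \ H).filter (fun e => v ∈ e ∧ u ∈ e)).card
      + (H.filter (fun e => u ∈ e ∧ v ∈ e)).card + (U.card - 1).choose 2
    ≤ (P.card - 1).choose 2 + (H.filter (fun e => v ∈ e ∧ u ∈ e ∧ e ∩ P ⊆ U)).card := by
  classical
  have huP : u ∈ P := hUP hu
  set Φ : Finset V → Finset V := fun e => (e ∩ P).erase u with hΦ
  set T : Finset (Finset V) := (P.erase u).powersetCard 2 with hT
  set SU : Finset (Finset V) := (U.erase u).powersetCard 2 with hSU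
  set SH : Finset (Finset V) := (H.filter (fun e => u ∈ e ∧ v ∈ e)).image Φ with hSH
  -- membership facts for extremal edges
  have hext : ∀ e ∈ extremalH13 Q P W, (e ∩ Q).card = 1 ∧ (e ∩ P).card = 3 ∧
      (e ∩ P ∩ W).Nonempty ∧ ¬ e ∩ P ⊆ W := by
    intro e he
    simpa [extremalH13] using he
  -- SH has the same card as the codegree
  have hSHcard : SH.card = (H.filter (fun e => u ∈ e ∧ v ∈ e)).card := by
    apply Finset.card_image_of_injOn
    intro e1 h1 e2 h2 h12
    simp only [Finset.coe_filter, Set.mem_setOf_eq] at h1 h2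
    calc e1 = insert v (insert u (Φ e1)) :=
          reconstruct hQP hv huP h1.2.2 h1.2.1 (hH e1 h1.1).1
      _ = insert v (insert u (Φ e2)) := by rw [h12]
      _ = e2 := (reconstruct hQP hv huP h2.2.2 h2.2.1 (hH e2 h2.1).1).symm
  have hSHT : SH ⊆ T := by
    intro s hs
    obtain ⟨e, he, rfl⟩ := Finset.mem_image.mp hs
    simp only [Finset.mem_filter] at he
    refine Finset.mem_powersetCard.mpr ⟨Finset.erase_subset_erase u Finset.inter_subset_right, ?_⟩
    rw [hΦ]
    simp only []
    rw [Finset.card_erase_of_mem (Finset.mem_inter.mpr ⟨he.2.1, huP⟩), (hH e he.1).2]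
  have hSUT : SU ⊆ T := Finset.powersetCard_mono (Finset.erase_subset_erase u hUP)
  -- the missing extremal edges through (v,u) inject into T \ (SH ∪ SU)
  have hmain : ((extremalH13 Q P W \ H).filter (fun e => v ∈ e ∧ u ∈ e)).card
      ≤ (T \ (SH ∪ SU)).card := by
    apply Finset.card_le_card_of_injOn Φ
    · intro e he
      simp only [Finset.mem_coe, Finset.mem_filter, Finset.mem_sdiff] at he
      obtain ⟨⟨heX, heH⟩, hve, hue⟩ := he
      obtain ⟨c1, c2, c3, c4⟩ := hext e heX
      rw [Finset.mem_coe, Finset.mem_sdiff]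
      constructor
      · refine Finset.mem_powersetCard.mpr
          ⟨Finset.erase_subset_erase u Finset.inter_subset_right, ?_⟩
        rw [hΦ]; simp only []
        rw [Finset.card_erase_of_mem (Finset.mem_inter.mpr ⟨hue, huP⟩), c2]
      · rw [Finset.mem_union]
        rintro (hmem | hmem)
        · obtain ⟨e', he', h12⟩ := Finset.mem_image.mp hmem
          simp only [Finset.mem_filter] at he'
          have : e = e' := by
            calc e = insert v (insert u (Φ e)) := reconstruct hQP hv huP hve hue c1
              _ = insert v (insert u (Φ e')) := by rw [h12]
              _ = e' := (reconstruct hQP hv huP he'.2.2 he'.2.1 (hH e' he'.1).1).symm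
          exact heH (this ▸ he'.1)
        · obtain ⟨w, hw⟩ := c3
          have hwP : w ∈ e ∩ P := Finset.mem_inter.mpr
            ⟨(Finset.mem_inter.mp (Finset.mem_inter.mp hw).1).1,
             (Finset.mem_inter.mp (Finset.mem_inter.mp hw).1).2⟩
          have hwW : w ∈ W := (Finset.mem_inter.mp hw).2
          have hwU : w ∉ U := by
            rw [hW] at hwW
            exact (Finset.mem_sdiff.mp hwW).2
          have hwu : w ≠ u := fun h => hwU (h ▸ hu)
          have : w ∈ Φ e := Finset.mem_erase.mpr ⟨hwu, hwP⟩
          have hsub := (Finset.mem_powersetCard.mp hmem).1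
          exact hwU (Finset.mem_of_mem_erase (hsub this))
    · intro e1 h1 e2 h2 h12
      simp only [Finset.coe_filter, Set.mem_setOf_eq, Finset.mem_sdiff] at h1 h2
      calc e1 = insert v (insert u (Φ e1)) :=
            reconstruct hQP hv huP h1.2.1 h1.2.2 (hext e1 h1.1.1).1
        _ = insert v (insert u (Φ e2)) := by rw [h12]
        _ = e2 := (reconstruct hQP hv huP h2.2.1 h2.2.2 (hext e2 h2.1.1).1).symm
  -- the intersection SH ∩ SU is controlled by x
  have hinter : (SH ∩ SU).card ≤ (H.filter (fun e => v ∈ e ∧ u ∈ e ∧ e ∩ P ⊆ U)).card := by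
    have hsub : SH ∩ SU ⊆ (H.filter (fun e => v ∈ e ∧ u ∈ e ∧ e ∩ P ⊆ U)).image Φ := by
      intro s hs
      obtain ⟨hs1, hs2⟩ := Finset.mem_inter.mp hs
      obtain ⟨e, he, rfl⟩ := Finset.mem_image.mp hs1
      simp only [Finset.mem_filter] at he
      refine Finset.mem_image.mpr ⟨e, ?_, rfl⟩
      simp only [Finset.mem_filter]
      have hΦU : Φ e ⊆ U.erase u := (Finset.mem_powersetCard.mp hs2).1
      have hPe : e ∩ P = insert u (Φ e) :=
        (Finset.insert_erase (Finset.mem_inter.mpr ⟨he.2.1, huP⟩)).symm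
      refine ⟨he.1, he.2.2, he.2.1, ?_⟩
      rw [hPe]
      exact Finset.insert_subset hu (hΦU.trans (Finset.erase_subset u U))
    exact (Finset.card_le_card hsub).trans (Finset.card_image_le)
  have hTcard : T.card = (P.card - 1).choose 2 := by
    rw [hT, Finset.card_powersetCard, Finset.card_erase_of_mem huP]
  have hSUcard : SU.card = (U.card - 1).choose 2 := by
    rw [hSU, Finset.card_powersetCard, Finset.card_erase_of_mem hu]
  have h1 : (T \ (SH ∪ SU)).card + (SH ∪ SU).card = T.card :=
    Finset.card_sdiff_add_card_eq_card (Finset.union_subset hSHT hSUT)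
  have h2 : (SH ∪ SU).card + (SH ∩ SU).card = SH.card + SU.card :=
    Finset.card_union_add_card_inter SH SU
  omega


set_option maxHeartbeats 4000000 in
/-- There exists `ε₀ > 0` such that for all `0 < ε ≤ ε₀` and `0 < ρ ≤ ε/4`
there exists `N` such that for every `n ∈ 3ℤ` with `n ≥ N`: let `H` be a (1,3)-partite
4-graph with classes `Q, P`, `3|Q| = |P| = n`, with
`d_H({u,v}) ≥ C(n-1,2) - C(2n/3,2) - ρn²` for all `v ∈ Q`, `u ∈ P`. If `H` is not
`ε`-close to any `H_{1,3}(n, n/3)` on `V(H)` (larger class `P`, smaller class `Q`), then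
every `A ⊆ V(H)` with `|A ∩ Q| ≥ (1/3 - ε/8)n` and `|A ∩ P| ≥ (2/3 - ε/8)n` satisfies
`e(H[A]) ≥ (ε/6)·e(H)`. -/
theorem dense_on_large_sets :
    ∃ ε₀ : ℝ, 0 < ε₀ ∧ ∀ ε ρ : ℝ, 0 < ε → ε ≤ ε₀ → 0 < ρ → ρ ≤ ε / 4 →
      ∃ N : ℕ, ∀ n : ℕ, 3 ∣ n → N ≤ n →
        ∀ (Q P : Finset (Fin (n + n / 3))) (H : Finset (Finset (Fin (n + n / 3)))),
          Disjoint Q P → Q ∪ P = Finset.univ →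
          Q.card = n / 3 → P.card = n →
          (∀ e ∈ H, (e ∩ Q).card = 1 ∧ (e ∩ P).card = 3) →
          (∀ v ∈ Q, ∀ u ∈ P,
            (Nat.choose (n - 1) 2 : ℝ) - (Nat.choose (2 * n / 3) 2 : ℝ) - ρ * (n : ℝ) ^ 2 ≤
              ((H.filter (fun e => u ∈ e ∧ v ∈ e)).card : ℝ)) →
          (∀ U W : Finset (Fin (n + n / 3)), Disjoint U W → U ∪ W = P →
            U.card = 2 * n / 3 → W.card = n / 3 →
            ε * ((n + n / 3 : ℕ) : ℝ) ^ 4 ≤ (((extremalH13 Q P W) \ H).card : ℝ)) →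
          ∀ A : Finset (Fin (n + n / 3)),
            ((1 : ℝ) / 3 - ε / 8) * (n : ℝ) ≤ ((A ∩ Q).card : ℝ) →
            ((2 : ℝ) / 3 - ε / 8) * (n : ℝ) ≤ ((A ∩ P).card : ℝ) →
            ε / 6 * (H.card : ℝ) ≤ ((H.filter (fun e => e ⊆ A)).card : ℝ) := by
  classical
  refine ⟨1, one_pos, fun ε ρ hε hε1 hρ hρε => ⟨⌈1/ε⌉₊ + 3, fun n hdvd hN => ?_⟩⟩
  intro Q P H hQPd hQPu hQc hPc hHs hdeg hfar A hAQ hAP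
  by_contra hcon
  push_neg at hcon
  obtain ⟨m, hnm⟩ := hdvd
  have hm1 : 1 ≤ m := by omega
  have hn3 : n / 3 = m := by omega
  have h2n3 : 2 * n / 3 = 2 * m := by omega
  -- real facts
  have hmR : (1:ℝ) ≤ (m:ℝ) := by exact_mod_cast hm1
  have hnR : (n:ℝ) = 3 * (m:ℝ) := by exact_mod_cast congrArg (Nat.cast (R := ℝ)) hnm
  have hεn : 1 ≤ ε * (n:ℝ) := by
    have h1 : ((⌈1/ε⌉₊ : ℕ) : ℝ) ≤ (n:ℝ) := by
      have : ⌈1/ε⌉₊ ≤ n := by omega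
      exact_mod_cast this
    have h2 : 1/ε ≤ (n:ℝ) := (Nat.le_ceil (1/ε)).trans h1
    rw [div_le_iff₀ hε] at h2
    linarith [h2]
  -- construct U
  obtain ⟨U, hUP, hUcard, hUA⟩ : ∃ U : Finset (Fin (n + n / 3)), U ⊆ P ∧ U.card = 2*m ∧
      ((U \ A).card : ℝ) ≤ ε * (n:ℝ) / 8 := by
    by_cases hcase : 2*m ≤ (A ∩ P).card
    · obtain ⟨U, hU1, hU2⟩ := Finset.exists_subset_card_eq hcase
      refine ⟨U, hU1.trans Finset.inter_subset_right, hU2, ?_⟩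
      have hUe : U \ A = ∅ := Finset.sdiff_eq_empty_iff_subset.mpr
        (hU1.trans Finset.inter_subset_left)
      rw [hUe]
      simp only [Finset.card_empty, Nat.cast_zero]
      positivity
    · push_neg at hcase
      obtain ⟨U, hU1, hU2, hU3⟩ := Finset.exists_subsuperset_card_eq
        (Finset.inter_subset_right : A ∩ P ⊆ P) (le_of_lt hcase) (by omega)
      refine ⟨U, hU2, hU3, ?_⟩
      have h4 : (A ∩ P).card ≤ (U ∩ A).card := by
        apply Finset.card_le_card
        intro x hx
        exact Finset.mem_inter.mpr ⟨hU1 hx, (Finset.mem_inter.mp hx).1⟩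
      have h5 : (U ∩ A).card + (U \ A).card = U.card := Finset.card_inter_add_card_sdiff U A
      have h6 : ((U \ A).card : ℝ) ≤ 2*(m:ℝ) - ((A ∩ P).card : ℝ) := by
        have h7 : (U \ A).card + (A ∩ P).card ≤ 2*m := by omega
        have h8 := (Nat.cast_le (α := ℝ)).mpr h7
        push_cast at h8
        linarith
      linarith [hAP, h6]
  set W : Finset (Fin (n + n / 3)) := P \ U with hWdef
  have hWcard : W.card = n / 3 := by
    rw [hWdef, Finset.card_sdiff_of_subset hUP, hPc, hUcard]; omega
  have hDc := hfar U W Finset.disjoint_sdiff (Finset.union_sdiff_of_subset hUP)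
    (by rw [hUcard, h2n3]) hWcard
  -- abbreviations
  set Xf : Finset (Finset (Fin (n + n / 3))) := H.filter (fun e => e ∩ P ⊆ U) with hXf
  set E : Finset (Finset (Fin (n + n / 3))) := extremalH13 Q P W \ H with hE
  -- the summed pair inequality (ℕ)
  have hsumineq :
      (∑ v ∈ Q, ∑ u ∈ U, (E.filter (fun e => v ∈ e ∧ u ∈ e)).card)
        + ((∑ v ∈ Q, ∑ u ∈ U, (H.filter (fun e => u ∈ e ∧ v ∈ e)).card)
        + Q.card * (U.card * ((U.card - 1).choose 2)))
      ≤ Q.card * (U.card * ((P.card - 1).choose 2))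
        + ∑ v ∈ Q, ∑ u ∈ U, (H.filter (fun e => v ∈ e ∧ u ∈ e ∧ e ∩ P ⊆ U)).card := by
    have h := Finset.sum_le_sum (fun v hv => Finset.sum_le_sum (fun u hu =>
      pair_ineq hQPu hUP rfl hHs hv hu))
    simp only [Finset.sum_add_distrib, Finset.sum_const, smul_eq_mul] at h
    linarith [h]
  -- each missing extremal edge is counted at least once over pairs (v,u)
  have hDle : E.card ≤ ∑ v ∈ Q, ∑ u ∈ U, (E.filter (fun e => v ∈ e ∧ u ∈ e)).card := by
    rw [swap2 Q U E]
    calc E.card = ∑ e ∈ E, 1 := by rw [Finset.card_eq_sum_ones]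
      _ ≤ ∑ e ∈ E, (e ∩ Q).card * (e ∩ U).card := by
        apply Finset.sum_le_sum
        intro e he
        have heX : e ∈ extremalH13 Q P W := (Finset.mem_sdiff.mp he).1
        have hc : (e ∩ Q).card = 1 ∧ (e ∩ P).card = 3 ∧ (e ∩ P ∩ W).Nonempty ∧
            ¬ e ∩ P ⊆ W := by simpa [extremalH13] using heX
        obtain ⟨z, hz1, hz2⟩ := Finset.not_subset.mp hc.2.2.2
        have hzU : z ∈ U := by
          have hzP : z ∈ P := (Finset.mem_inter.mp hz1).2
          by_contra hzU
          exact hz2 (Finset.mem_sdiff.mpr ⟨hzP, hzU⟩)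
        have h1 : 1 ≤ (e ∩ U).card := Finset.card_pos.mpr
          ⟨z, Finset.mem_inter.mpr ⟨(Finset.mem_inter.mp hz1).1, hzU⟩⟩
        rw [hc.1, one_mul]
        exact h1
  -- the x-sum is at most 3 Xf.card
  have hxle : (∑ v ∈ Q, ∑ u ∈ U, (H.filter (fun e => v ∈ e ∧ u ∈ e ∧ e ∩ P ⊆ U)).card)
      ≤ 3 * Xf.card := by
    have hf : ∀ v u : Fin (n + n / 3), H.filter (fun e => v ∈ e ∧ u ∈ e ∧ e ∩ P ⊆ U)
        = Xf.filter (fun e => v ∈ e ∧ u ∈ e) := by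
      intro v u
      rw [hXf, Finset.filter_filter]
      exact Finset.filter_congr (fun e _ => by tauto)
    simp only [hf]
    rw [swap2 Q U Xf]
    have hstep : ∑ e ∈ Xf, (e ∩ Q).card * (e ∩ U).card ≤ ∑ _e ∈ Xf, 3 := by
      apply Finset.sum_le_sum
      intro e he
      have heH : e ∈ H := Finset.mem_of_mem_filter e he
      have h1 : (e ∩ Q).card = 1 := (hHs e heH).1
      have h2 : (e ∩ U).card ≤ 3 := by
        have h3 : (e ∩ U).card ≤ (e ∩ P).card :=
          Finset.card_le_card (Finset.inter_subset_inter (le_refl e) hUP)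
        rw [(hHs e heH).2] at h3
        exact h3
      rw [h1, one_mul]
      exact h2
    have hconst : ∑ _e ∈ Xf, 3 = 3 * Xf.card := by rw [Finset.sum_const, smul_eq_mul, mul_comm]
    rw [hconst] at hstep
    exact hstep
  -- degree sum lower bound (real)
  have hdsum : ((Q.card : ℝ) * (U.card : ℝ)) *
      (((n - 1).choose 2 : ℝ) - ((2 * n / 3).choose 2 : ℝ) - ρ * (n:ℝ) ^ 2)
      ≤ ((∑ v ∈ Q, ∑ u ∈ U, (H.filter (fun e => u ∈ e ∧ v ∈ e)).card : ℕ) : ℝ) := by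
    have h1 : ((∑ v ∈ Q, ∑ u ∈ U, (H.filter (fun e => u ∈ e ∧ v ∈ e)).card : ℕ) : ℝ)
        = ∑ v ∈ Q, ∑ u ∈ U, ((H.filter (fun e => u ∈ e ∧ v ∈ e)).card : ℝ) := by
      push_cast
      rfl
    rw [h1]
    calc ((Q.card : ℝ) * (U.card : ℝ)) * _
        = ∑ _v ∈ Q, ∑ _u ∈ U, (((n - 1).choose 2 : ℝ) - ((2 * n / 3).choose 2 : ℝ)
            - ρ * (n:ℝ) ^ 2) := by
          rw [Finset.sum_const, Finset.sum_const, nsmul_eq_mul, nsmul_eq_mul]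
          ring
      _ ≤ _ := Finset.sum_le_sum fun v hv => Finset.sum_le_sum fun u hu =>
          hdeg v hv u (hUP hu)
  -- split Xf into edges inside A and edges meeting the exceptional sets
  have hXsplit : Xf.card ≤ (H.filter (fun e => e ⊆ A)).card
      + (Q \ A).card * (P.card.choose 3)
      + (U \ A).card * (Q.card * ((P.card - 1).choose 2)) := by
    have hsub : Xf ⊆ (H.filter (fun e => e ⊆ A))
        ∪ H.filter (fun e => ((Q \ A) ∩ e).Nonempty)
        ∪ H.filter (fun e => ((U \ A) ∩ e).Nonempty) := by
      intro e he
      rw [hXf, Finset.mem_filter] at he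
      obtain ⟨heH, heU⟩ := he
      by_cases hA : e ⊆ A
      · exact Finset.mem_union.mpr (Or.inl (Finset.mem_union.mpr (Or.inl
          (Finset.mem_filter.mpr ⟨heH, hA⟩))))
      · obtain ⟨z, hz1, hz2⟩ := Finset.not_subset.mp hA
        have hzQP : z ∈ Q ∪ P := hQPu ▸ Finset.mem_univ z
        rcases Finset.mem_union.mp hzQP with hzQ | hzP
        · exact Finset.mem_union.mpr (Or.inl (Finset.mem_union.mpr (Or.inr
            (Finset.mem_filter.mpr ⟨heH, ⟨z, Finset.mem_inter.mpr
              ⟨Finset.mem_sdiff.mpr ⟨hzQ, hz2⟩, hz1⟩⟩⟩))))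
        · have hzU : z ∈ U := heU (Finset.mem_inter.mpr ⟨hz1, hzP⟩)
          exact Finset.mem_union.mpr (Or.inr (Finset.mem_filter.mpr ⟨heH,
            ⟨z, Finset.mem_inter.mpr ⟨Finset.mem_sdiff.mpr ⟨hzU, hz2⟩, hz1⟩⟩⟩))
    have hcount : ∀ T : Finset (Fin (n + n / 3)), T ⊆ P ∨ T ⊆ Q →
        (H.filter (fun e => (T ∩ e).Nonempty)).card ≤ ∑ v ∈ T, (H.filter (fun e => v ∈ e)).card := by
      intro T _
      rw [swap1 T H]
      calc (H.filter (fun e => (T ∩ e).Nonempty)).card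
          = ∑ e ∈ H.filter (fun e => (T ∩ e).Nonempty), 1 := Finset.card_eq_sum_ones _
        _ ≤ ∑ e ∈ H.filter (fun e => (T ∩ e).Nonempty), (T ∩ e).card := by
            apply Finset.sum_le_sum
            intro e he
            exact Finset.card_pos.mpr (Finset.mem_filter.mp he).2
        _ ≤ ∑ e ∈ H, (T ∩ e).card := Finset.sum_le_sum_of_subset (Finset.filter_subset _ _)
    have hQbound : (H.filter (fun e => ((Q \ A) ∩ e).Nonempty)).card
        ≤ (Q \ A).card * (P.card.choose 3) := by
      calc (H.filter (fun e => ((Q \ A) ∩ e).Nonempty)).card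
          ≤ ∑ v ∈ Q \ A, (H.filter (fun e => v ∈ e)).card := hcount _ (Or.inr Finset.sdiff_subset)
        _ ≤ ∑ _v ∈ Q \ A, P.card.choose 3 := Finset.sum_le_sum fun v hv =>
            degQ_le hQPu hHs (Finset.sdiff_subset hv)
        _ = (Q \ A).card * (P.card.choose 3) := by rw [Finset.sum_const, smul_eq_mul]
    have hUbound : (H.filter (fun e => ((U \ A) ∩ e).Nonempty)).card
        ≤ (U \ A).card * (Q.card * ((P.card - 1).choose 2)) := by
      calc (H.filter (fun e => ((U \ A) ∩ e).Nonempty)).card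
          ≤ ∑ u ∈ U \ A, (H.filter (fun e => u ∈ e)).card :=
            hcount _ (Or.inl (Finset.sdiff_subset.trans hUP))
        _ ≤ ∑ _u ∈ U \ A, Q.card * ((P.card - 1).choose 2) := Finset.sum_le_sum fun u hu =>
            degP_le hQPu hHs (hUP (Finset.sdiff_subset hu))
        _ = (U \ A).card * (Q.card * ((P.card - 1).choose 2)) := by
            rw [Finset.sum_const, smul_eq_mul]
    calc Xf.card ≤ _ := Finset.card_le_card hsub
      _ ≤ _ := by
        refine le_trans (Finset.card_union_le _ _) ?_
        refine add_le_add (le_trans (Finset.card_union_le _ _) ?_) hUbound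
        exact add_le_add le_rfl hQbound
  -- combine the counts in ℕ
  have hNat : E.card + (∑ v ∈ Q, ∑ u ∈ U, (H.filter (fun e => u ∈ e ∧ v ∈ e)).card)
      + Q.card * (U.card * ((U.card - 1).choose 2))
      ≤ Q.card * (U.card * ((P.card - 1).choose 2)) + 3 * Xf.card := by
    calc E.card + (∑ v ∈ Q, ∑ u ∈ U, (H.filter (fun e => u ∈ e ∧ v ∈ e)).card)
          + Q.card * (U.card * ((U.card - 1).choose 2))
        ≤ (∑ v ∈ Q, ∑ u ∈ U, (E.filter (fun e => v ∈ e ∧ u ∈ e)).card)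
          + (∑ v ∈ Q, ∑ u ∈ U, (H.filter (fun e => u ∈ e ∧ v ∈ e)).card)
          + Q.card * (U.card * ((U.card - 1).choose 2)) := by
          exact Nat.add_le_add_right (Nat.add_le_add_right hDle _) _
      _ ≤ Q.card * (U.card * ((P.card - 1).choose 2))
          + ∑ v ∈ Q, ∑ u ∈ U, (H.filter (fun e => v ∈ e ∧ u ∈ e ∧ e ∩ P ⊆ U)).card := by
          have := hsumineq
          omega
      _ ≤ Q.card * (U.card * ((P.card - 1).choose 2)) + 3 * Xf.card :=
          Nat.add_le_add_left hxle _
  -- move to the reals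
  have hR := (Nat.cast_le (α := ℝ)).mpr hNat
  push_cast at hR
  -- identify the numerical values of the cards
  have hQcR : ((Q.card : ℕ) : ℝ) = (m : ℝ) := by rw [hQc, hn3]
  have hUcR : ((U.card : ℕ) : ℝ) = 2 * (m : ℝ) := by rw [hUcard]; push_cast; ring
  have hU1 : U.card - 1 = 2 * m - 1 := by omega
  have hP1 : P.card - 1 = n - 1 := by omega
  rw [hQcR, hUcR, hU1, hP1] at hR
  -- the choose identity
  have hchN : (2 * m).choose 2 = (2 * m - 1).choose 2 + (2 * m - 1) := by
    have e2 : ((2 * m - 1) + 1).choose 2 = (2 * m - 1).choose 1 + (2 * m - 1).choose 2 :=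
      Nat.choose_succ_succ _ 1
    rw [Nat.choose_one_right] at e2
    have e1 : 2 * m - 1 + 1 = 2 * m := by omega
    rw [e1] at e2
    omega
  have hch : (((2 * m).choose 2 : ℕ) : ℝ)
      = (((2 * m - 1).choose 2 : ℕ) : ℝ) + (2 * (m:ℝ) - 1) := by
    rw [hchN]
    push_cast [Nat.cast_sub (by omega : 1 ≤ 2 * m)]
    ring
  have hch2m : (((2 * n / 3).choose 2 : ℕ) : ℝ) = (((2 * m).choose 2 : ℕ) : ℝ) := by rw [h2n3]
  rw [hch2m] at hdsum
  have hchmul : 2 * (m:ℝ)^2 * (((2 * m).choose 2 : ℕ) : ℝ)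
      = 2 * (m:ℝ)^2 * (((2 * m - 1).choose 2 : ℕ) : ℝ) + 2 * (m:ℝ)^2 * (2 * (m:ℝ) - 1) := by
    rw [hch]; ring
  have hQU : ((Q.card : ℕ) : ℝ) * ((U.card : ℕ) : ℝ) = 2 * (m:ℝ)^2 := by
    rw [hQcR, hUcR]; ring
  rw [hQU] at hdsum
  -- step 1 : bound on the number of missing extremal edges
  have hstep1 : ((E.card : ℕ) : ℝ) ≤ 2 * (m:ℝ)^2 * (2 * (m:ℝ) - 1)
      + 2 * (m:ℝ)^2 * (ρ * (n:ℝ)^2) + 3 * ((Xf.card : ℕ) : ℝ) := by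
    push_cast at hdsum
    linarith only [hR, hdsum, hchmul]
  -- real version of the split of Xf
  have hXR := (Nat.cast_le (α := ℝ)).mpr hXsplit
  push_cast at hXR
  rw [hQcR, hP1] at hXR
  -- bounds on the exceptional sets
  have hqa : (((Q \ A).card : ℕ) : ℝ) ≤ ε * (n:ℝ) / 8 := by
    have h1 := Finset.card_inter_add_card_sdiff Q A
    have h2 : Q ∩ A = A ∩ Q := Finset.inter_comm Q A
    rw [h2] at h1
    have h1' : (A ∩ Q).card + (Q \ A).card = m := by omega
    have h3 := (Nat.cast_le (α := ℝ)).mpr h1'.le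
    push_cast at h3
    have h4 : (1 / 3 - ε / 8) * (n:ℝ) = (m:ℝ) - ε * (n:ℝ) / 8 := by rw [hnR]; ring
    rw [h4] at hAQ
    linarith
  -- bounds on binomial coefficients
  have hch3 : ((P.card.choose 3 : ℕ) : ℝ) ≤ (n:ℝ)^3 := by
    have h1 : P.card.choose 3 ≤ n ^ 3 := by
      rw [hPc]
      exact Nat.choose_le_pow _ _
    exact_mod_cast h1
  have hch2' : (((n - 1).choose 2 : ℕ) : ℝ) ≤ (n:ℝ)^2 := by
    have h1 : (n - 1).choose 2 ≤ (n - 1) ^ 2 := Nat.choose_le_pow _ _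
    have h2 : (n - 1) ^ 2 ≤ n ^ 2 := Nat.pow_le_pow_left (by omega) 2
    exact_mod_cast h1.trans h2
  have hHcard : ((H.card : ℕ) : ℝ) ≤ (m:ℝ) * (n:ℝ)^3 := by
    have h1 := cardH_le hQPu hHs
    have h2 := (Nat.cast_le (α := ℝ)).mpr h1
    push_cast at h2
    rw [hQcR] at h2
    calc ((H.card : ℕ) : ℝ) ≤ (m:ℝ) * ((P.card.choose 3 : ℕ) : ℝ) := h2
      _ ≤ (m:ℝ) * (n:ℝ)^3 := by
          apply mul_le_mul_of_nonneg_left hch3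
          positivity
  -- rewrite the far hypothesis
  have h4m : n + n / 3 = 4 * m := by omega
  have h4mR : ((n + n / 3 : ℕ) : ℝ) = 4 * (m:ℝ) := by rw [h4m]; push_cast; ring
  rw [h4mR] at hDc
  -- switch from n to m
  rw [hnR] at hstep1 hqa hUA hch3 hch2' hHcard hεn
  -- product bounds
  have hqa0 : (0:ℝ) ≤ (((Q \ A).card : ℕ) : ℝ) := Nat.cast_nonneg _
  have hua0 : (0:ℝ) ≤ (((U \ A).card : ℕ) : ℝ) := Nat.cast_nonneg _
  have t1 : (((Q \ A).card : ℕ) : ℝ) * ((P.card.choose 3 : ℕ) : ℝ)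
      ≤ (ε * (3 * (m:ℝ)) / 8) * (3 * (m:ℝ))^3 := by
    apply mul_le_mul hqa hch3 (Nat.cast_nonneg _)
    positivity
  have t2 : (((U \ A).card : ℕ) : ℝ) * ((m:ℝ) * (((n - 1).choose 2 : ℕ) : ℝ))
      ≤ (ε * (3 * (m:ℝ)) / 8) * ((m:ℝ) * (3 * (m:ℝ))^2) := by
    apply mul_le_mul hUA _ _ _
    · apply mul_le_mul_of_nonneg_left hch2'
      positivity
    · positivity
    · positivity
  have t3 : ε / 6 * ((H.card : ℕ) : ℝ) ≤ ε / 6 * ((m:ℝ) * (3 * (m:ℝ))^3) := by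
    apply mul_le_mul_of_nonneg_left hHcard
    positivity
  -- final contradiction
  have hm4 : (0:ℝ) ≤ (m:ℝ)^4 := by positivity
  have hm3 : (0:ℝ) ≤ (m:ℝ)^3 := by positivity
  have hm2 : (0:ℝ) ≤ (m:ℝ)^2 := by positivity
  have hρm : ρ * (m:ℝ)^4 ≤ ε/4 * (m:ℝ)^4 :=
    mul_le_mul_of_nonneg_right hρε hm4
  have hmono : 4 * (m:ℝ)^3 ≤ 12 * ε * (m:ℝ)^4 := by
    have hkey : (0:ℝ) ≤ (3 * (ε * (m:ℝ)) - 1) * (4 * (m:ℝ)^3) :=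
      mul_nonneg (by linarith only [hεn, hnR]) (by positivity)
    linarith only [hkey]
  have hpos : (0:ℝ) < ε * (m:ℝ)^4 := by positivity
  have t1' : (((Q \ A).card : ℕ) : ℝ) * ((P.card.choose 3 : ℕ) : ℝ)
      ≤ 81/8 * ε * (m:ℝ)^4 := by linarith only [t1]
  have t2' : (((U \ A).card : ℕ) : ℝ) * ((m:ℝ) * (((n - 1).choose 2 : ℕ) : ℝ))
      ≤ 27/8 * ε * (m:ℝ)^4 := by linarith only [t2]
  have t3' : ε / 6 * ((H.card : ℕ) : ℝ) ≤ 9/2 * ε * (m:ℝ)^4 := by linarith only [t3]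
  have hs2 : ((E.card : ℕ) : ℝ) ≤ 4 * (m:ℝ)^3 + 18 * (ρ * (m:ℝ)^4)
      + 3 * ((Xf.card : ℕ) : ℝ) := by linarith only [hstep1, hm2]
  have hXR' : ((Xf.card : ℕ) : ℝ) ≤ ((H.filter (fun e => e ⊆ A)).card : ℝ)
      + 81/8 * ε * (m:ℝ)^4 + 27/8 * ε * (m:ℝ)^4 := by linarith only [hXR, t1', t2']
  have hF : (((H.filter (fun e => e ⊆ A)).card : ℕ) : ℝ) < 9/2 * ε * (m:ℝ)^4 := by
    linarith only [hcon, t3']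
  linarith only [hDc, hs2, hXR', hF, hρm, hmono, hpos]
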